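/- In Weispfenning's example with parameters u, v and variables x, y, z, lexicographic monomial order with z > y > x, let f = u·y + x, g = v·z + x + 1, h = v·z − u·y + 1 (so h = g − f) in P, and I = Ideal.span {f, g}. Then the set {f, g, h} is a comprehensive Gröbner basis of I: for every parameter assignment v̄ : {u,v} → L, σ_{v̄}({f, g, h}) is a Gröbner basis of Ideal.map σ_{v̄} I. -/

import Mathlib

open MvPolynomial

/-- The leading monomial (`m.degree`) of a multivariate polynomial w.r.t. a monomial order. -/
noncomputable def mdeg {σ R : Type*} [CommSemiring R] (m : MonomialOrder σ)
    (p : MvPolynomial σ R) : σ →₀ ℕ :=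
  m.toSyn.symm (p.support.sup fun s => m.toSyn s)

/-- `H` is a Gröbner basis of the ideal `J`. -/
def IsGroebnerBasis {σ F : Type*} [Field F] (m : MonomialOrder σ)
    (J : Ideal (MvPolynomial σ F)) (H : Set (MvPolynomial σ F)) : Prop :=
  H ⊆ (J : Set (MvPolynomial σ F)) ∧
    ∀ p ∈ J, p ≠ 0 → ∃ h ∈ H, h ≠ 0 ∧ mdeg m h ≤ mdeg m p

/-- Specialization of the parameters at `v : U → L`. -/
noncomputable def paramSpec {K L U X : Type*} [CommSemiring K] [CommSemiring L]
    [Algebra K L] (v : U → L) :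
    MvPolynomial X (MvPolynomial U K) →+* MvPolynomial X L :=
  MvPolynomial.map ((MvPolynomial.aeval v : MvPolynomial U K →ₐ[K] L) : MvPolynomial U K →+* L)

/-- `G` is a comprehensive Gröbner basis of `I` on the set `A` of parameter assignments. -/
def IsCGBOn {K U X : Type*} (L : Type*) [Field K] [Field L] [Algebra K L]
    (m : MonomialOrder X) (I : Ideal (MvPolynomial X (MvPolynomial U K)))
    (A : Set (U → L)) (G : Set (MvPolynomial X (MvPolynomial U K))) : Prop :=
  G.Finite ∧ G ⊆ (I : Set (MvPolynomial X (MvPolynomial U K))) ∧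
    ∀ v ∈ A, IsGroebnerBasis m (I.map (paramSpec (L := L) v))
      (paramSpec (L := L) v '' G)

/-- `G` is a comprehensive Gröbner basis of `I`. -/
def IsCGB {K U X : Type*} (L : Type*) [Field K] [Field L] [Algebra K L]
    (m : MonomialOrder X) (I : Ideal (MvPolynomial X (MvPolynomial U K)))
    (G : Set (MvPolynomial X (MvPolynomial U K))) : Prop :=
  G.Finite ∧ G ⊆ (I : Set (MvPolynomial X (MvPolynomial U K))) ∧
    ∀ v : U → L, IsGroebnerBasis m (I.map (paramSpec (L := L) v))
      (paramSpec (L := L) v '' G)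

namespace Weispfenning

/-- Variables: `z = X 0 > y = X 1 > x = X 2` under the lexicographic order. -/
noncomputable abbrev m3 : MonomialOrder (Fin 3) := MonomialOrder.lex

variable (K : Type*) [Field K]

/-- `f = u·y + x`. -/
noncomputable def f : MvPolynomial (Fin 3) (MvPolynomial (Fin 2) K) :=
  MvPolynomial.C (MvPolynomial.X 0) * MvPolynomial.X 1 + MvPolynomial.X 2

/-- `g = v·z + x + 1`. -/
noncomputable def g : MvPolynomial (Fin 3) (MvPolynomial (Fin 2) K) :=
  MvPolynomial.C (MvPolynomial.X 1) * MvPolynomial.X 0 + MvPolynomial.X 2 + 1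

/-- `h = v·z - u·y + 1`. -/
noncomputable def h : MvPolynomial (Fin 3) (MvPolynomial (Fin 2) K) :=
  MvPolynomial.C (MvPolynomial.X 1) * MvPolynomial.X 0
    - MvPolynomial.C (MvPolynomial.X 0) * MvPolynomial.X 1 + 1

/-- `I = ⟨f, g⟩`. -/
noncomputable def I : Ideal (MvPolynomial (Fin 3) (MvPolynomial (Fin 2) K)) :=
  Ideal.span {f K, g K}

end Weispfenning

namespace Aux
variable {σ R : Type*} [CommSemiring R] (m : MonomialOrder σ)

lemma toSyn_mdeg (p : MvPolynomial σ R) :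
    m.toSyn (mdeg m p) = p.support.sup fun s => m.toSyn s := by
  simp [mdeg]

lemma mdeg_mem_support {p : MvPolynomial σ R} (h : p ≠ 0) : mdeg m p ∈ p.support := by
  obtain ⟨s, hs, he⟩ := Finset.exists_mem_eq_sup p.support
    (MvPolynomial.support_nonempty.mpr h) (fun s => m.toSyn s)
  have : mdeg m p = s := by rw [mdeg, he, AddEquiv.symm_apply_apply]
  rwa [this]

lemma le_toSyn_mdeg {p : MvPolynomial σ R} {s : σ →₀ ℕ} (hs : s ∈ p.support) :
    m.toSyn s ≤ m.toSyn (mdeg m p) := by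
  rw [toSyn_mdeg]; exact Finset.le_sup hs

lemma mdeg_eq {p : MvPolynomial σ R} {d : σ →₀ ℕ} (hd : coeff d p ≠ 0)
    (hmax : ∀ s ∈ p.support, m.toSyn s ≤ m.toSyn d) : mdeg m p = d := by
  apply m.toSyn.injective
  apply le_antisymm
  · rw [toSyn_mdeg]; exact Finset.sup_le hmax
  · exact le_toSyn_mdeg m (MvPolynomial.mem_support_iff.mpr hd)

lemma coeff_mdeg_ne_zero {p : MvPolynomial σ R} (h : p ≠ 0) :
    coeff (mdeg m p) p ≠ 0 :=
  MvPolynomial.mem_support_iff.mp (mdeg_mem_support m h)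

lemma fin3_ext {s d : Fin 3 →₀ ℕ} (h0 : s 0 = d 0) (h1 : s 1 = d 1) (h2 : s 2 = d 2) :
    s = d := by
  ext j; fin_cases j <;> assumption

lemma lex_facts {s d : Fin 3 →₀ ℕ} (h : toLex s ≤ toLex d) :
    s 0 < d 0 ∨ (s 0 = d 0 ∧ (s 1 < d 1 ∨ (s 1 = d 1 ∧ s 2 ≤ d 2))) := by
  rcases (le_iff_eq_or_lt.mp h).imp id Finsupp.Lex.lt_iff.mp with heq | ⟨i, hj, hi⟩
  · have : s = d := congrArg ofLex heq
    subst this; right; exact ⟨rfl, Or.inr ⟨rfl, le_rfl⟩⟩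
  · fin_cases i
    · exact Or.inl hi
    · exact Or.inr ⟨hj 0 (by decide), Or.inl hi⟩
    · exact Or.inr ⟨hj 0 (by decide), Or.inr ⟨hj 1 (by decide), le_of_lt hi⟩⟩

lemma lex_le_single {s : Fin 3 →₀ ℕ} {i : Fin 3} {k : ℕ}
    (h : toLex s ≤ toLex (Finsupp.single i k)) :
    s i < k ∨ s = Finsupp.single i k := by
  have hf := lex_facts h
  fin_cases i
  · have hf' : s 0 < k ∨ (s 0 = k ∧ (s 1 < 0 ∨ (s 1 = 0 ∧ s 2 ≤ 0))) := by simpa using hf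
    rcases hf' with h0 | ⟨h0, h1 | ⟨h1, h2⟩⟩
    · exact Or.inl (by simpa using h0)
    · omega
    · right
      refine fin3_ext ?_ ?_ ?_ <;> simp [h0, h1, Nat.le_zero.mp h2]
  · have hf' : s 0 < 0 ∨ (s 0 = 0 ∧ (s 1 < k ∨ (s 1 = k ∧ s 2 ≤ 0))) := by simpa using hf
    rcases hf' with h0 | ⟨h0, h1 | ⟨h1, h2⟩⟩
    · omega
    · exact Or.inl (by simpa using h1)
    · right
      refine fin3_ext ?_ ?_ ?_ <;> simp [h0, h1, Nat.le_zero.mp h2]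
  · have hf' : s 0 < 0 ∨ (s 0 = 0 ∧ (s 1 < 0 ∨ (s 1 = 0 ∧ s 2 ≤ k))) := by simpa using hf
    rcases hf' with h0 | ⟨h0, h1 | ⟨h1, h2⟩⟩
    · omega
    · omega
    · rcases Nat.lt_or_ge (s 2) k with h | h
      · exact Or.inl (by simpa using h)
      · right
        refine fin3_ext ?_ ?_ ?_ <;> simp [h0, h1, le_antisymm h2 h]

lemma lex_le_single_two {s : Fin 3 →₀ ℕ} {k : ℕ}
    (h : toLex s ≤ toLex (Finsupp.single 2 k)) : s 0 = 0 ∧ s 1 = 0 := by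
  have hf := lex_facts h
  have h0 : (Finsupp.single (2:Fin 3) k) 0 = 0 := by simp
  have h1 : (Finsupp.single (2:Fin 3) k) 1 = 0 := by simp
  rw [h0, h1] at hf
  omega

end Aux

namespace Aux
open Polynomial in
lemma key {L : Type*} [Field L] [Infinite L] (p : MvPolynomial (Fin 3) L) (i : Fin 3)
    (k : ℕ) (α β : Fin 3 → L) (hαi : α i = 1)
    (hc : MvPolynomial.coeff (Finsupp.single i k) p ≠ 0)
    (hs1 : ∀ s ∈ p.support, s i < k ∨ s = Finsupp.single i k)
    (hs2 : ∀ s ∈ p.support, ∀ j, j ≠ i → α j ≠ 0 → s j = 0)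
    (hv : ∀ t : L, MvPolynomial.eval (fun j => α j * t + β j) p = 0) : False := by
  classical
  set g : Fin 3 → Polynomial L := fun j => Polynomial.C (α j) * Polynomial.X + Polynomial.C (β j) with hg
  set φ : MvPolynomial (Fin 3) L →ₐ[L] Polynomial L := MvPolynomial.aeval g with hφ
  -- evaluation compatibility
  have heval : ∀ t : L, (φ p).eval t = MvPolynomial.eval (fun j => α j * t + β j) p := by
    intro t
    have : (Polynomial.evalRingHom t).comp (φ : MvPolynomial (Fin 3) L →+* Polynomial L)
        = MvPolynomial.eval (fun j => α j * t + β j) := by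
      apply MvPolynomial.ringHom_ext <;> intro r <;> simp [hφ, hg]
    exact RingHom.congr_fun this p
  have hφp : φ p = 0 := Polynomial.funext (fun t => by rw [heval t, hv t, Polynomial.eval_zero])
  -- now compute coeff k of φ p
  have hmem : Finsupp.single i k ∈ p.support := MvPolynomial.mem_support_iff.mpr hc
  have hcoeff : (φ p).coeff k = MvPolynomial.coeff (Finsupp.single i k) p := by
    conv_lhs => rw [p.as_sum, map_sum, Polynomial.finset_sum_coeff]
    rw [Finset.sum_eq_single_of_mem _ hmem]
    · -- the leading term
      rw [hφ, MvPolynomial.aeval_monomial, Finsupp.prod_single_index (by simp)]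
      have hgi : g i = Polynomial.X + Polynomial.C (β i) := by rw [hg]; simp [hαi]
      rw [hgi]
      have hmon : (Polynomial.X + Polynomial.C (β i)).Monic := Polynomial.monic_X_add_C _
      have hdeg : ((Polynomial.X + Polynomial.C (β i)) ^ k).natDegree = k := by
        rw [Polynomial.natDegree_pow, Polynomial.natDegree_X_add_C, mul_one]
      have := (hmon.pow k).coeff_natDegree
      rw [hdeg] at this
      simp [Polynomial.coeff_C_mul, this, Polynomial.algebraMap_eq]
    · -- other terms vanish
      intro s hs hne
      rcases hs1 s hs with hlt | heq
      · apply Polynomial.coeff_eq_zero_of_natDegree_lt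
        calc (φ ((MvPolynomial.monomial s) (MvPolynomial.coeff s p))).natDegree
            ≤ (Polynomial.C (MvPolynomial.coeff s p)).natDegree
              + (s.prod fun j e => g j ^ e).natDegree := by
              rw [hφ, MvPolynomial.aeval_monomial, Polynomial.algebraMap_eq]
              exact Polynomial.natDegree_mul_le
          _ ≤ 0 + ∑ j ∈ s.support, (g j ^ s j).natDegree := by
              apply add_le_add
              · simp
              · exact Polynomial.natDegree_prod_le _ _
          _ ≤ ∑ j ∈ s.support, (if j = i then s i else 0) := by
              rw [zero_add]
              apply Finset.sum_le_sum
              intro j hj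
              by_cases hji : j = i
              · subst hji
                calc (g j ^ s j).natDegree ≤ s j * (g j).natDegree :=
                      Polynomial.natDegree_pow_le
                  _ ≤ s j * 1 := by
                      apply Nat.mul_le_mul_left
                      rw [hg]
                      refine le_trans (Polynomial.natDegree_add_le _ _) ?_
                      simp [Polynomial.natDegree_C]
                      exact le_trans (Polynomial.natDegree_C_mul_le _ _) (by simp)
                  _ = s j := mul_one _
                simp
              · simp only [hji, if_false]
                have hα : α j = 0 := by
                  by_contra hα
                  exact (Finsupp.mem_support_iff.mp hj) (hs2 s hs j hji hα)
                have : g j = Polynomial.C (β j) := by rw [hg]; simp [hα]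
                rw [this]
                calc (Polynomial.C (β j) ^ s j).natDegree
                    ≤ s j * (Polynomial.C (β j)).natDegree := Polynomial.natDegree_pow_le
                  _ = 0 := by simp
          _ ≤ s i := by
              rw [Finset.sum_ite_eq' s.support i (fun _ => s i)]
              split <;> omega
          _ < k := hlt
      · exact absurd heq hne
  rw [hφp] at hcoeff
  simp only [Polynomial.coeff_zero] at hcoeff
  exact hc hcoeff.symm
end Aux

namespace Aux

lemma eval_mem_span {L : Type*} [CommRing L] {A B p : MvPolynomial (Fin 3) L}
    (hp : p ∈ Ideal.span {A, B}) (w : Fin 3 → L)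
    (hA : MvPolynomial.eval w A = 0) (hB : MvPolynomial.eval w B = 0) :
    MvPolynomial.eval w p = 0 := by
  obtain ⟨u, q, rfl⟩ := Ideal.mem_span_pair.mp hp
  simp [hA, hB]

lemma no_bad {L : Type*} [Field L] [Infinite L] {A B p : MvPolynomial (Fin 3) L}
    (i : Fin 3) (α β : Fin 3 → L) (hαi : α i = 1)
    (hvA : ∀ t, MvPolynomial.eval (fun j => α j * t + β j) A = 0)
    (hvB : ∀ t, MvPolynomial.eval (fun j => α j * t + β j) B = 0)
    (hp : p ∈ Ideal.span {A, B}) (hpne : p ≠ 0)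
    (hd : ∀ j, j ≠ i → mdeg MonomialOrder.lex p j = 0)
    (hα : i = 2 ∨ ∀ j, j ≠ i → α j = 0) : False := by
  set d := mdeg MonomialOrder.lex p with hdd
  have hsingle : d = Finsupp.single i (d i) := by
    ext j
    rcases eq_or_ne j i with rfl | hne
    · simp
    · rw [Finsupp.single_apply, if_neg (Ne.symm hne)]
      exact hd j hne
  have hlexle : ∀ s ∈ p.support, toLex s ≤ toLex d := fun s hs =>
    MonomialOrder.lex_le_iff.mp (le_toSyn_mdeg MonomialOrder.lex hs)
  apply key p i (d i) α β hαi
  · rw [← hsingle]; exact coeff_mdeg_ne_zero _ hpne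
  · intro s hs
    apply lex_le_single
    rw [← hsingle]
    exact hlexle s hs
  · intro s hs j hji hαj
    rcases hα with rfl | hzero
    · have h2 : toLex s ≤ toLex (Finsupp.single 2 (d 2)) := by
        rw [← hsingle]; exact hlexle s hs
      have := lex_le_single_two h2
      fin_cases j
      · exact this.1
      · exact this.2
      · exact absurd rfl hji
    · exact absurd (hzero j hji) hαj
  · intro t
    exact eval_mem_span hp _ (hvA t) (hvB t)

lemma main_case {L : Type*} [Field L] [Infinite L] (A B : MvPolynomial (Fin 3) L)
    (jA jB i : Fin 3) (α β : Fin 3 → L)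
    (hA0 : A ≠ 0) (hB0 : B ≠ 0)
    (hmA : mdeg MonomialOrder.lex A = Finsupp.single jA 1)
    (hmB : mdeg MonomialOrder.lex B = Finsupp.single jB 1)
    (hcover : ∀ j : Fin 3, j ≠ i → j = jA ∨ j = jB)
    (hαi : α i = 1)
    (hα : i = 2 ∨ ∀ j, j ≠ i → α j = 0)
    (hvA : ∀ t, MvPolynomial.eval (fun j => α j * t + β j) A = 0)
    (hvB : ∀ t, MvPolynomial.eval (fun j => α j * t + β j) B = 0)
    (p : MvPolynomial (Fin 3) L) (hp : p ∈ Ideal.span {A, B}) (hpne : p ≠ 0) :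
    ∃ q ∈ ({A, B} : Set (MvPolynomial (Fin 3) L)), q ≠ 0 ∧
      mdeg MonomialOrder.lex q ≤ mdeg MonomialOrder.lex p := by
  by_cases h1 : (mdeg MonomialOrder.lex p) jA ≠ 0
  · exact ⟨A, Or.inl rfl, hA0, by
      rw [hmA]; exact Finsupp.single_le_iff.mpr (Nat.one_le_iff_ne_zero.mpr h1)⟩
  · by_cases h2 : (mdeg MonomialOrder.lex p) jB ≠ 0
    · exact ⟨B, Or.inr rfl, hB0, by
        rw [hmB]; exact Finsupp.single_le_iff.mpr (Nat.one_le_iff_ne_zero.mpr h2)⟩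
    · exfalso
      push_neg at h1 h2
      apply no_bad i α β hαi hvA hvB hp hpne ?_ hα
      intro j hj
      rcases hcover j hj with rfl | rfl
      · exact h1
      · exact h2

-- lex comparison facts
lemma L1 : toLex (Finsupp.single (2:Fin 3) 1) ≤ toLex (Finsupp.single (1:Fin 3) 1) := by
  apply le_of_lt
  rw [Finsupp.Lex.lt_iff]
  refine ⟨1, ?_, by simp⟩
  intro j hj
  fin_cases j
  · simp
  · exact absurd hj (by simp)
  · exact absurd hj (by decide)

lemma L2 : toLex (Finsupp.single (2:Fin 3) 1) ≤ toLex (Finsupp.single (0:Fin 3) 1) := by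
  apply le_of_lt
  rw [Finsupp.Lex.lt_iff]
  exact ⟨0, fun j hj => absurd hj (by simp), by simp⟩

lemma L3 {k : ℕ} {i : Fin 3} : toLex (0 : Fin 3 →₀ ℕ) ≤ toLex (Finsupp.single i k) :=
  Finsupp.toLex_monotone (by intro j; simp)

end Aux

namespace Aux
variable {L : Type*} [Field L]

lemma coeffF (a : L) :
    MvPolynomial.coeff (Finsupp.single 1 1)
      (MvPolynomial.C a * MvPolynomial.X 1 + MvPolynomial.X 2 : MvPolynomial (Fin 3) L) = a := by
  rw [MvPolynomial.coeff_add, MvPolynomial.coeff_C_mul, MvPolynomial.coeff_X',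
    MvPolynomial.coeff_X']
  rw [if_pos rfl, if_neg ?_]
  · ring
  · intro h
    have := Finsupp.single_eq_single_iff _ _ _ _ |>.mp h
    simp at this

lemma suppF (a : L) :
    (MvPolynomial.C a * MvPolynomial.X 1 + MvPolynomial.X 2 : MvPolynomial (Fin 3) L).support
      ⊆ {Finsupp.single 1 1, Finsupp.single 2 1} := by
  classical
  refine subset_trans MvPolynomial.support_add ?_
  apply Finset.union_subset
  · rw [MvPolynomial.C_mul_X_eq_monomial, MvPolynomial.support_monomial]
    split
    · exact Finset.empty_subset _
    · intro s hs; simp at hs; simp [hs]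
  · rw [MvPolynomial.support_X]
    intro s hs; simp at hs; simp [hs]

lemma mdegF {a : L} (ha : a ≠ 0) :
    mdeg MonomialOrder.lex
      (MvPolynomial.C a * MvPolynomial.X 1 + MvPolynomial.X 2 : MvPolynomial (Fin 3) L)
      = Finsupp.single 1 1 := by
  apply mdeg_eq
  · rw [coeffF]; exact ha
  · intro s hs
    have := suppF a hs
    simp only [Finset.mem_insert, Finset.mem_singleton] at this
    rcases this with rfl | rfl
    · exact le_rfl
    · exact MonomialOrder.lex_le_iff.mpr L1

lemma neF {a : L} (ha : a ≠ 0) :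
    (MvPolynomial.C a * MvPolynomial.X 1 + MvPolynomial.X 2 : MvPolynomial (Fin 3) L) ≠ 0 := by
  intro h
  apply ha
  rw [← coeffF a, h, MvPolynomial.coeff_zero]

lemma coeffG (b : L) :
    MvPolynomial.coeff (Finsupp.single 0 1)
      (MvPolynomial.C b * MvPolynomial.X 0 + MvPolynomial.X 2 + 1 : MvPolynomial (Fin 3) L) = b := by
  rw [MvPolynomial.coeff_add, MvPolynomial.coeff_add, MvPolynomial.coeff_C_mul,
    MvPolynomial.coeff_X', MvPolynomial.coeff_X', MvPolynomial.coeff_one]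
  rw [if_pos rfl, if_neg ?_, if_neg ?_]
  · ring
  · intro h
    have := DFunLike.congr_fun h 0
    simp at this
  · intro h
    have := Finsupp.single_eq_single_iff _ _ _ _ |>.mp h
    simp at this

lemma suppG (b : L) :
    (MvPolynomial.C b * MvPolynomial.X 0 + MvPolynomial.X 2 + 1 : MvPolynomial (Fin 3) L).support
      ⊆ {Finsupp.single 0 1, Finsupp.single 2 1, 0} := by
  classical
  refine subset_trans MvPolynomial.support_add ?_
  apply Finset.union_subset
  · refine subset_trans MvPolynomial.support_add ?_
    apply Finset.union_subset
    · rw [MvPolynomial.C_mul_X_eq_monomial, MvPolynomial.support_monomial]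
      split
      · exact Finset.empty_subset _
      · intro s hs; simp at hs; simp [hs]
    · rw [MvPolynomial.support_X]
      intro s hs; simp at hs; simp [hs]
  · intro s hs
    have h1 : (1 : MvPolynomial (Fin 3) L) = MvPolynomial.monomial 0 1 := by
      simp
    rw [h1, MvPolynomial.support_monomial] at hs
    rw [if_neg one_ne_zero] at hs
    simp at hs; simp [hs]

lemma mdegG {b : L} (hb : b ≠ 0) :
    mdeg MonomialOrder.lex
      (MvPolynomial.C b * MvPolynomial.X 0 + MvPolynomial.X 2 + 1 : MvPolynomial (Fin 3) L)
      = Finsupp.single 0 1 := by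
  apply mdeg_eq
  · rw [coeffG]; exact hb
  · intro s hs
    have := suppG b hs
    simp only [Finset.mem_insert, Finset.mem_singleton] at this
    rcases this with rfl | rfl | rfl
    · exact le_rfl
    · exact MonomialOrder.lex_le_iff.mpr L2
    · exact MonomialOrder.lex_le_iff.mpr L3

lemma neG {b : L} (hb : b ≠ 0) :
    (MvPolynomial.C b * MvPolynomial.X 0 + MvPolynomial.X 2 + 1 : MvPolynomial (Fin 3) L) ≠ 0 := by
  intro h
  apply hb
  rw [← coeffG b, h, MvPolynomial.coeff_zero]

lemma mdegX2 : mdeg MonomialOrder.lex (MvPolynomial.X 2 : MvPolynomial (Fin 3) L)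
    = Finsupp.single 2 1 := by
  apply mdeg_eq
  · rw [MvPolynomial.coeff_X_same]; exact one_ne_zero
  · intro s hs
    rw [MvPolynomial.support_X] at hs
    simp at hs
    simp [hs]

lemma coeffX21 : MvPolynomial.coeff (Finsupp.single 2 1)
    (MvPolynomial.X 2 + 1 : MvPolynomial (Fin 3) L) = 1 := by
  rw [MvPolynomial.coeff_add, MvPolynomial.coeff_X_same, MvPolynomial.coeff_one]
  rw [if_neg ?_]
  · ring
  · intro h
    have := DFunLike.congr_fun h 2
    simp at this

lemma mdegX21 : mdeg MonomialOrder.lex (MvPolynomial.X 2 + 1 : MvPolynomial (Fin 3) L)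
    = Finsupp.single 2 1 := by
  classical
  apply mdeg_eq
  · rw [coeffX21]; exact one_ne_zero
  · intro s hs
    have := MvPolynomial.support_add hs
    rw [MvPolynomial.support_X] at this
    simp only [Finset.mem_union, Finset.mem_singleton] at this
    rcases this with rfl | hs1
    · exact le_rfl
    · have h1 : (1 : MvPolynomial (Fin 3) L) = MvPolynomial.monomial 0 1 := by simp
      rw [h1, MvPolynomial.support_monomial, if_neg one_ne_zero] at hs1
      simp at hs1
      subst hs1
      exact MonomialOrder.lex_le_iff.mpr L3

lemma neX21 : (MvPolynomial.X 2 + 1 : MvPolynomial (Fin 3) L) ≠ 0 := by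
  intro h
  have := coeffX21 (L := L)
  rw [h, MvPolynomial.coeff_zero] at this
  exact one_ne_zero this.symm

lemma mdeg_one : mdeg MonomialOrder.lex (1 : MvPolynomial (Fin 3) L) = 0 := by
  classical
  apply mdeg_eq
  · rw [MvPolynomial.coeff_one, if_pos rfl]; exact one_ne_zero
  · intro s hs
    have h1 : (1 : MvPolynomial (Fin 3) L) = MvPolynomial.monomial 0 1 := by simp
    rw [h1, MvPolynomial.support_monomial, if_neg one_ne_zero] at hs
    simp at hs
    subst hs
    exact le_rfl

end Aux

open Weispfenning in
theorem weispfenning_fgh_is_CGB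
    {K L : Type*} [Field K] [Field L] [Algebra K L] [IsAlgClosed L] :
    IsCGB L (m3) (I K) {f K, g K, h K} := by
  classical
  have hgf : h K = g K - f K := by
    unfold Weispfenning.h Weispfenning.g Weispfenning.f
    ring
  have hfI : f K ∈ I K := Ideal.subset_span (Set.mem_insert _ _)
  have hgI : g K ∈ I K := Ideal.subset_span (Set.mem_insert_of_mem _ rfl)
  have hsub : ({f K, g K, h K} : Set (MvPolynomial (Fin 3) (MvPolynomial (Fin 2) K)))
      ⊆ (I K : Set (MvPolynomial (Fin 3) (MvPolynomial (Fin 2) K))) := by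
    intro x hx
    simp only [Set.mem_insert_iff, Set.mem_singleton_iff] at hx
    rcases hx with rfl | rfl | rfl
    · exact hfI
    · exact hgI
    · rw [hgf]; exact sub_mem hgI hfI
  refine ⟨Set.toFinite _, hsub, ?_⟩
  intro v
  constructor
  · rintro q ⟨r, hr, rfl⟩
    exact Ideal.mem_map_of_mem _ (hsub hr)
  intro p hp hpne
  have hF : paramSpec (L := L) v (f K)
      = MvPolynomial.C (v 0) * MvPolynomial.X 1 + MvPolynomial.X 2 := by
    simp [paramSpec, Weispfenning.f]
  have hG : paramSpec (L := L) v (g K)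
      = MvPolynomial.C (v 1) * MvPolynomial.X 0 + MvPolynomial.X 2 + 1 := by
    simp [paramSpec, Weispfenning.g]
  have hH : paramSpec (L := L) v (h K)
      = MvPolynomial.C (v 1) * MvPolynomial.X 0
        - MvPolynomial.C (v 0) * MvPolynomial.X 1 + 1 := by
    simp [paramSpec, Weispfenning.h]
  have hspan : (I K).map (paramSpec (L := L) v)
      = Ideal.span {paramSpec (L := L) v (f K), paramSpec (L := L) v (g K)} := by
    rw [Weispfenning.I, Ideal.map_span]
    congr 1
    rw [Set.image_insert_eq, Set.image_singleton]
  rw [hspan] at hp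
  have memF : paramSpec (L := L) v (f K) ∈ paramSpec (L := L) v '' {f K, g K, h K} :=
    ⟨f K, Set.mem_insert _ _, rfl⟩
  have memG : paramSpec (L := L) v (g K) ∈ paramSpec (L := L) v '' {f K, g K, h K} :=
    ⟨g K, Set.mem_insert_of_mem _ (Set.mem_insert _ _), rfl⟩
  have memH : paramSpec (L := L) v (h K) ∈ paramSpec (L := L) v '' {f K, g K, h K} :=
    ⟨h K, Set.mem_insert_of_mem _ (Set.mem_insert_of_mem _ rfl), rfl⟩
  by_cases ha : v 0 = 0
  · by_cases hb : v 1 = 0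
    · -- both parameters vanish : σ h = 1
      have hH1 : paramSpec (L := L) v (h K) = 1 := by
        rw [hH, ha, hb]; simp
      refine ⟨paramSpec (L := L) v (h K), memH, ?_, ?_⟩
      · rw [hH1]; exact one_ne_zero
      · rw [hH1]
        rw [show mdeg m3 (1 : MvPolynomial (Fin 3) L) = 0 from Aux.mdeg_one]
        exact Finsupp.le_def.mpr fun i => Nat.zero_le _
    · -- a = 0, b ≠ 0
      have hF' : paramSpec (L := L) v (f K) = MvPolynomial.X 2 := by
        rw [hF, ha]; simp
      obtain ⟨q, hq, hq0, hqle⟩ := Aux.main_case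
        (paramSpec (L := L) v (f K)) (paramSpec (L := L) v (g K))
        2 0 1 ![0, 1, 0] ![-(v 1)⁻¹, 0, 0]
        (by rw [hF']; exact MvPolynomial.X_ne_zero _)
        (by rw [hG]; exact Aux.neG hb)
        (by rw [hF']; exact Aux.mdegX2)
        (by rw [hG]; exact Aux.mdegG hb)
        (by intro j hj; fin_cases j
            · exact Or.inr rfl
            · exact absurd rfl hj
            · exact Or.inl rfl)
        (by simp)
        (Or.inr (by intro j hj; fin_cases j
                    · rfl
                    · exact absurd rfl hj
                    · rfl))
        (by intro t; rw [hF']; simp)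
        (by intro t; rw [hG]; simp; field_simp; ring)
        p hp hpne
      refine ⟨q, ?_, hq0, hqle⟩
      rcases hq with rfl | rfl
      · exact memF
      · exact memG
  · by_cases hb : v 1 = 0
    · -- a ≠ 0, b = 0
      have hG' : paramSpec (L := L) v (g K) = MvPolynomial.X 2 + 1 := by
        rw [hG, hb]; simp
      obtain ⟨q, hq, hq0, hqle⟩ := Aux.main_case
        (paramSpec (L := L) v (f K)) (paramSpec (L := L) v (g K))
        1 2 0 ![1, 0, 0] ![0, (v 0)⁻¹, -1]
        (by rw [hF]; exact Aux.neF ha)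
        (by rw [hG']; exact Aux.neX21)
        (by rw [hF]; exact Aux.mdegF ha)
        (by rw [hG']; exact Aux.mdegX21)
        (by intro j hj; fin_cases j
            · exact absurd rfl hj
            · exact Or.inl rfl
            · exact Or.inr rfl)
        (by simp)
        (Or.inr (by intro j hj; fin_cases j
                    · exact absurd rfl hj
                    · rfl
                    · rfl))
        (by intro t; rw [hF]; simp; field_simp; ring)
        (by intro t; rw [hG']; simp)
        p hp hpne
      refine ⟨q, ?_, hq0, hqle⟩
      rcases hq with rfl | rfl
      · exact memF
      · exact memG
    · -- a ≠ 0, b ≠ 0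
      obtain ⟨q, hq, hq0, hqle⟩ := Aux.main_case
        (paramSpec (L := L) v (f K)) (paramSpec (L := L) v (g K))
        1 0 2 ![-(v 1)⁻¹, -(v 0)⁻¹, 1] ![-(v 1)⁻¹, 0, 0]
        (by rw [hF]; exact Aux.neF ha)
        (by rw [hG]; exact Aux.neG hb)
        (by rw [hF]; exact Aux.mdegF ha)
        (by rw [hG]; exact Aux.mdegG hb)
        (by intro j hj; fin_cases j
            · exact Or.inr rfl
            · exact Or.inl rfl
            · exact absurd rfl hj)
        (by simp)
        (Or.inl rfl)
        (by intro t; rw [hF]; simp; field_simp; ring)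
        (by intro t; rw [hG]; simp; field_simp; ring)
        p hp hpne
      refine ⟨q, ?_, hq0, hqle⟩
      rcases hq with rfl | rfl
      · exact memF
      · exact memG
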